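/- Strong duality holds between the offline primal problem and its dual: the optimal value P* of the primal equals the optimal (infimum) value D* of the dual. Furthermore, the objective value of any feasible solution (v, y) of the dual is an upper bound on P*. -/

import Mathlib

open Finset Real
open scoped Classical

noncomputable section

/-- Expectation of `f` over a uniformly random permutation of `Fin n`. -/
def permExp (n : ℕ) (f : Equiv.Perm (Fin n) → ℝ) : ℝ :=
  (∑ σ : Equiv.Perm (Fin n), f σ) / (Nat.factorial n : ℝ)

/-- Probability of the event `P` over a uniformly random permutation of `Fin n`. -/
def permProb (n : ℕ) (P : Equiv.Perm (Fin n) → Prop) : ℝ :=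
  ((Finset.univ.filter (fun σ : Equiv.Perm (Fin n) => P σ)).card : ℝ) / (Nat.factorial n : ℝ)

/-- Each `M i` is nondecreasing, concave, continuously differentiable on `[0,∞)`, `M i 0 = 0`. -/
def GoodM {m : ℕ} (M : Fin m → ℝ → ℝ) : Prop :=
  ∀ i, MonotoneOn (M i) (Set.Ici 0) ∧ ConcaveOn ℝ (Set.Ici 0) (M i) ∧
    (∀ x ∈ Set.Ici (0 : ℝ), DifferentiableAt ℝ (M i) x) ∧
    ContinuousOn (deriv (M i)) (Set.Ici 0) ∧ M i 0 = 0

/-- Feasibility for the offline primal problem. -/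
def primalFeasible {m n : ℕ} (x : Fin m → Fin n → ℝ) : Prop :=
  (∀ i j, 0 ≤ x i j) ∧ ∀ j, ∑ i, x i j ≤ 1

/-- Objective of the offline primal problem. -/
def primalObj {m n : ℕ} (b : Fin m → Fin n → ℝ) (M : Fin m → ℝ → ℝ)
    (x : Fin m → Fin n → ℝ) : ℝ :=
  ∑ i, M i (∑ j, b i j * x i j)

/-- `OPT` is the optimal value of the offline primal problem. -/
def IsOPT {m n : ℕ} (b : Fin m → Fin n → ℝ) (M : Fin m → ℝ → ℝ) (OPT : ℝ) : Prop :=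
  IsGreatest {v | ∃ x : Fin m → Fin n → ℝ, primalFeasible x ∧ v = primalObj b M x} OPT

/-- `alloc w q` is the 0/1 allocation putting mass one on a single index maximizing
`q k * (M k)' (w k)`, ties broken by a fixed rule. -/
def IsAllocRule {m : ℕ} (M : Fin m → ℝ → ℝ)
    (alloc : (Fin m → ℝ) → (Fin m → ℝ) → Fin m → ℝ) : Prop :=
  ∀ w q : Fin m → ℝ, ∃ i0 : Fin m,
    (∀ i, alloc w q i = if i = i0 then 1 else 0) ∧
    ∀ k, q k * deriv (M k) (w k) ≤ q i0 * deriv (M i0) (w i0)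

/-- Feasibility for the partial problem `(P_ℓ)` with arrival order `σ`: the allocation is
supported on the first `ℓ` arrivals, and `u i = ∑_{j<ℓ} (n/ℓ) b_{i,σ(j)} x_{ij}`. -/
def partialFeasible {m n : ℕ} (b : Fin m → Fin n → ℝ) (σ : Equiv.Perm (Fin n)) (ℓ : ℕ)
    (x : Fin m → Fin n → ℝ) (u : Fin m → ℝ) : Prop :=
  (∀ i j, 0 ≤ x i j) ∧ (∀ j, ∑ i, x i j ≤ 1) ∧
  (∀ i (j : Fin n), ℓ ≤ (j : ℕ) → x i j = 0) ∧
  ∀ i, ∑ j, ((n : ℝ) / (ℓ : ℝ)) * b i (σ j) * x i j = u i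

/-- `u` is the `u`-part of an optimal solution of the partial problem `(P_ℓ)`. -/
def partialOptimal {m n : ℕ} (b : Fin m → Fin n → ℝ) (M : Fin m → ℝ → ℝ)
    (σ : Equiv.Perm (Fin n)) (ℓ : ℕ) (u : Fin m → ℝ) : Prop :=
  (∃ x, partialFeasible b σ ℓ x u) ∧
  ∀ x' u', partialFeasible b σ ℓ x' u' → ∑ i, M i (u' i) ≤ ∑ i, M i (u i)

/-- General position assumption: for every nonzero `p`, at most `m` columns `j` have a
non-singleton argmax set of `i ↦ b i j * p i`. -/
def GeneralPosition {m n : ℕ} (b : Fin m → Fin n → ℝ) : Prop :=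
  ∀ p : Fin m → ℝ, p ≠ 0 →
    ({j : Fin n | ¬ ∃! i : Fin m, ∀ k, b k j * p k ≤ b i j * p i}).ncard ≤ m

/-- Total value collected by the One-Time Learning Algorithm: nothing is allocated on the
first `en = εn` arrivals, afterwards arrival `j` is allocated by the rule `x_i(û, b_j)`. -/
def olaRevenue {m n : ℕ} (b : Fin m → Fin n → ℝ) (M : Fin m → ℝ → ℝ)
    (alloc : (Fin m → ℝ) → (Fin m → ℝ) → Fin m → ℝ) (en : ℕ)
    (uhat : Fin m → ℝ) (σ : Equiv.Perm (Fin n)) : ℝ :=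
  ∑ i, M i (∑ j : Fin n,
    if (j : ℕ) < en then 0 else b i (σ j) * alloc uhat (fun i' => b i' (σ j)) i)

/-- Total value collected by the Dynamic Learning Algorithm: nothing is allocated on the
first `en = εn` arrivals; for `2^r en ≤ j < 2^{r+1} en` arrival `j` is allocated by the rule
`x_i(û^{r+1}, b_j)`, where `uhat k` denotes `û^k`, the optimal `u` of `(P_{ℓ_k})`,
`ℓ_k = 2^{k-1} εn`. -/
def dlaRevenue {m n : ℕ} (b : Fin m → Fin n → ℝ) (M : Fin m → ℝ → ℝ)
    (alloc : (Fin m → ℝ) → (Fin m → ℝ) → Fin m → ℝ) (en : ℕ)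
    (uhat : ℕ → Fin m → ℝ) (σ : Equiv.Perm (Fin n)) : ℝ :=
  ∑ i, M i (∑ j : Fin n,
    if (j : ℕ) < en then 0
    else b i (σ j) * alloc (uhat (Nat.log 2 ((j : ℕ) / en) + 1)) (fun i' => b i' (σ j)) i)

/-- Value collected for bidder `i` over arrival positions in `[lo, hi)` using the allocation
rule with threshold vector `uhat`. -/
def rangeValue {m n : ℕ} (b : Fin m → Fin n → ℝ)
    (alloc : (Fin m → ℝ) → (Fin m → ℝ) → Fin m → ℝ)
    (uhat : Fin m → ℝ) (lo hi : ℕ) (σ : Equiv.Perm (Fin n)) (i : Fin m) : ℝ :=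
  ∑ j : Fin n, if lo ≤ (j : ℕ) ∧ (j : ℕ) < hi
    then b i (σ j) * alloc uhat (fun i' => b i' (σ j)) i else 0

/-- Feasibility for the dual problem. -/
def dualFeasible {m n : ℕ} (b : Fin m → Fin n → ℝ) (M : Fin m → ℝ → ℝ)
    (v : Fin m → ℝ) (y : Fin n → ℝ) : Prop :=
  (∀ i, 0 ≤ v i) ∧ (∀ j, 0 ≤ y j) ∧ ∀ i j, b i j * deriv (M i) (v i) ≤ y j

/-- Objective of the dual problem. -/
def dualObj {m n : ℕ} (b : Fin m → Fin n → ℝ) (M : Fin m → ℝ → ℝ)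
    (v : Fin m → ℝ) (y : Fin n → ℝ) : ℝ :=
  ∑ j, y j + ∑ i, (M i (v i) - deriv (M i) (v i) * v i)

section Aux


/-- Gradient inequality for a differentiable concave function on `[0,∞)`. -/
lemma concave_grad_ineq (f : ℝ → ℝ) (hconc : ConcaveOn ℝ (Set.Ici 0) f)
    (hd : ∀ x ∈ Set.Ici (0:ℝ), DifferentiableAt ℝ f x) {v s : ℝ} (hv : 0 ≤ v) (hs : 0 ≤ s) :
    f s ≤ f v + deriv f v * (s - v) := by
  rcases lt_trichotomy v s with h | h | h
  · have h1 := hconc.slope_le_deriv (Set.mem_Ici.2 hv) (Set.mem_Ici.2 hs) h (hd v hv)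
    rw [slope_def_field] at h1
    have hsv : 0 < s - v := by linarith
    rw [div_le_iff₀ hsv] at h1
    linarith
  · simp [h]
  · have h1 := hconc.deriv_le_slope (Set.mem_Ici.2 hs) (Set.mem_Ici.2 hv) h (hd v hv)
    rw [slope_def_field] at h1
    have hsv : 0 < v - s := by linarith
    rw [le_div_iff₀ hsv] at h1
    nlinarith

/-- Nonnegativity of the derivative for a monotone concave function on `[0,∞)`. -/
lemma deriv_nonneg_of_mono (f : ℝ → ℝ) (hmono : MonotoneOn f (Set.Ici 0))
    (hconc : ConcaveOn ℝ (Set.Ici 0) f)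
    (hd : ∀ x ∈ Set.Ici (0:ℝ), DifferentiableAt ℝ f x) {v : ℝ} (hv : 0 ≤ v) :
    0 ≤ deriv f v := by
  have hv1 : (0:ℝ) ≤ v + 1 := by linarith
  have h1 := hconc.slope_le_deriv (Set.mem_Ici.2 hv) (Set.mem_Ici.2 hv1) (lt_add_one v) (hd v hv)
  rw [slope_def_field] at h1
  have h2 : f v ≤ f (v + 1) := hmono (Set.mem_Ici.2 hv) (Set.mem_Ici.2 hv1) (by linarith)
  calc (0:ℝ) ≤ (f (v+1) - f v) / (v + 1 - v) := by
        apply div_nonneg (by linarith); linarith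
    _ ≤ deriv f v := h1

/-- A function with positive derivative at `0` cannot be maximized at `0` on `(0,1]`. -/
lemma not_max_of_pos_deriv (φ : ℝ → ℝ) {L : ℝ} (hφ : HasDerivAt φ L 0) (hL : 0 < L)
    (hmax : ∀ δ : ℝ, 0 < δ → δ ≤ 1 → φ δ ≤ φ 0) : False := by
  have ht : Filter.Tendsto (slope φ 0) (nhdsWithin 0 {(0:ℝ)}ᶜ) (nhds L) :=
    hasDerivAt_iff_tendsto_slope.1 hφ
  have ht' : Filter.Tendsto (slope φ 0) (nhdsWithin 0 (Set.Ioi 0)) (nhds L) :=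
    ht.mono_left (nhdsWithin_mono 0 (fun x hx => by
      simp only [Set.mem_compl_iff, Set.mem_singleton_iff]
      exact ne_of_gt hx))
  have hev : ∀ᶠ δ in nhdsWithin (0:ℝ) (Set.Ioi 0), slope φ 0 δ ≤ 0 := by
    filter_upwards [Ioo_mem_nhdsGT_of_mem (Set.left_mem_Ico.2 one_pos)] with δ hδ
    rw [slope_def_field]
    apply div_nonpos_of_nonpos_of_nonneg
    · have := hmax δ hδ.1 (le_of_lt hδ.2); linarith
    · linarith [hδ.1]
  have : L ≤ 0 := le_of_tendsto ht' hev
  linarith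

end Aux

/-- Strong duality `P* = D*`, and every dual feasible solution gives an upper
bound on `P*`. -/
theorem strong_duality {m n : ℕ} (hm : 0 < m) (hn : 0 < n)
    (b : Fin m → Fin n → ℝ) (hb : ∀ i j, b i j ∈ Set.Icc (0 : ℝ) 1)
    (M : Fin m → ℝ → ℝ) (hM : GoodM M) (P D : ℝ)
    (hP : IsGreatest {p | ∃ x : Fin m → Fin n → ℝ, primalFeasible x ∧ p = primalObj b M x} P)
    (hD : IsGLB {d | ∃ v y, dualFeasible b M v y ∧ d = dualObj b M v y} D) :
    P = D ∧ ∀ v y, dualFeasible b M v y → P ≤ dualObj b M v y := by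
  have hMono : ∀ i, MonotoneOn (M i) (Set.Ici 0) := fun i => (hM i).1
  have hConc : ∀ i, ConcaveOn ℝ (Set.Ici 0) (M i) := fun i => (hM i).2.1
  have hDiff : ∀ i, ∀ x ∈ Set.Ici (0:ℝ), DifferentiableAt ℝ (M i) x := fun i => (hM i).2.2.1
  obtain ⟨x, ⟨hx0, hxs⟩, hPx⟩ := hP.1
  set s : Fin m → ℝ := fun i => ∑ j, b i j * x i j with hs_def
  have hs : ∀ i, 0 ≤ s i := fun i =>
    Finset.sum_nonneg fun j _ => mul_nonneg (hb i j).1 (hx0 i j)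
  -- Weak duality
  have weak : ∀ v y, dualFeasible b M v y → P ≤ dualObj b M v y := by
    rintro v y ⟨hv, hy, hvy⟩
    have h1 : ∀ i, M i (s i) ≤ M i (v i) + deriv (M i) (v i) * (s i - v i) :=
      fun i => concave_grad_ineq _ (hConc i) (hDiff i) (hv i) (hs i)
    have h2 : ∑ i, deriv (M i) (v i) * s i ≤ ∑ j, y j := by
      calc ∑ i, deriv (M i) (v i) * s i
          = ∑ j, ∑ i, (b i j * deriv (M i) (v i)) * x i j := by
            rw [Finset.sum_comm]
            refine Finset.sum_congr rfl fun i _ => ?_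
            rw [hs_def, Finset.mul_sum]
            exact Finset.sum_congr rfl fun j _ => by ring
        _ ≤ ∑ j, ∑ i, y j * x i j := by
            refine Finset.sum_le_sum fun j _ => Finset.sum_le_sum fun i _ => ?_
            exact mul_le_mul_of_nonneg_right (hvy i j) (hx0 i j)
        _ = ∑ j, y j * ∑ i, x i j := by
            exact Finset.sum_congr rfl fun j _ => (Finset.mul_sum _ _ _).symm
        _ ≤ ∑ j, y j * 1 := Finset.sum_le_sum fun j _ =>
            mul_le_mul_of_nonneg_left (hxs j) (hy j)
        _ = ∑ j, y j := by simp
    have h3 : P ≤ ∑ i, (M i (v i) + deriv (M i) (v i) * (s i - v i)) := by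
      rw [hPx]; exact Finset.sum_le_sum fun i _ => h1 i
    have h4 : ∑ i, (M i (v i) + deriv (M i) (v i) * (s i - v i))
        = ∑ i, deriv (M i) (v i) * s i + ∑ i, (M i (v i) - deriv (M i) (v i) * v i) := by
      rw [← Finset.sum_add_distrib]
      exact Finset.sum_congr rfl fun i _ => by ring
    rw [dualObj]
    linarith
  -- Strong duality: construct a dual solution from the optimal primal
  have hmne : (Finset.univ : Finset (Fin m)).Nonempty := ⟨⟨0, hm⟩, Finset.mem_univ _⟩
  set g : Fin m → ℝ := fun i => deriv (M i) (s i) with hg_def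
  have hg : ∀ i, 0 ≤ g i := fun i =>
    deriv_nonneg_of_mono _ (hMono i) (hConc i) (hDiff i) (hs i)
  set y : Fin n → ℝ := fun j => Finset.univ.sup' hmne (fun i => b i j * g i) with hy_def
  have hyub : ∀ i j, b i j * g i ≤ y j := fun i j =>
    Finset.le_sup' (fun i => b i j * g i) (Finset.mem_univ i)
  have hfeas : dualFeasible b M s y :=
    ⟨hs, fun j => le_trans (mul_nonneg (hb ⟨0, hm⟩ j).1 (hg _)) (hyub ⟨0, hm⟩ j),
      fun i j => hyub i j⟩
  -- key complementary-slackness-type inequality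
  have key : ∀ j, y j ≤ ∑ i, (b i j * g i) * x i j := by
    intro j
    by_contra hcon
    push_neg at hcon
    obtain ⟨i0, -, hi0⟩ := Finset.exists_mem_eq_sup' hmne (fun i => b i j * g i)
    set c : Fin m → ℝ := fun i => (if i = i0 then b i0 j else 0) - b i j * x i j with hc_def
    have hder : HasDerivAt (fun δ : ℝ => ∑ i, M i (s i + δ * c i)) (∑ i, g i * c i) 0 := by
      apply HasDerivAt.fun_sum
      intro i _
      have h1 : HasDerivAt (fun δ : ℝ => s i + δ * c i) (c i) 0 := by
        simpa using ((hasDerivAt_id (0:ℝ)).mul_const (c i)).const_add (s i)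
      have h2 : HasDerivAt (M i) (g i) (s i + 0 * c i) := by
        rw [show s i + 0 * c i = s i by ring]
        exact (hDiff i (s i) (hs i)).hasDerivAt
      exact h2.comp 0 h1
    have hLval : ∑ i, g i * c i = b i0 j * g i0 - ∑ i, (b i j * g i) * x i j := by
      rw [hc_def]
      simp only [mul_sub, mul_ite, mul_zero, Finset.sum_sub_distrib]
      rw [Finset.sum_ite_eq' Finset.univ i0 (fun i => g i * b i0 j)]
      simp only [Finset.mem_univ, if_true]
      congr 1
      · ring
      · exact Finset.sum_congr rfl fun i _ => by ring
    have hLpos : 0 < ∑ i, g i * c i := by rw [hLval, ← hi0]; linarith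
    apply not_max_of_pos_deriv _ hder hLpos
    intro δ hδ0 hδ1
    set x' : Fin m → Fin n → ℝ := fun i j' =>
      if j' = j then (1 - δ) * x i j + (if i = i0 then δ else 0) else x i j' with hx'_def
    have hx'0 : ∀ i j', 0 ≤ x' i j' := by
      intro i j'
      rw [hx'_def]
      by_cases h : j' = j
      · simp only [h, if_true]
        have : 0 ≤ (1 - δ) * x i j := mul_nonneg (by linarith) (hx0 i j)
        by_cases hi : i = i0
        · subst hi; simp only [eq_self_iff_true, if_true]; linarith
        · simp only [if_neg hi]; linarith
      · simp [h, hx0 i j']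
    have hx's : ∀ j', ∑ i, x' i j' ≤ 1 := by
      intro j'
      by_cases h : j' = j
      · subst h
        have : ∑ i, x' i j' = (1 - δ) * ∑ i, x i j' + δ := by
          simp only [hx'_def, if_true]
          rw [Finset.sum_add_distrib, ← Finset.mul_sum,
            Finset.sum_ite_eq' Finset.univ i0 (fun _ => δ)]
          simp
        rw [this]
        nlinarith [hxs j']
      · simp only [hx'_def, if_neg h]
        exact hxs j'
    have hsum : ∀ i, ∑ j', b i j' * x' i j' = s i + δ * c i := by
      intro i
      have step : ∀ j' : Fin n, b i j' * x' i j'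
          = b i j' * x i j' + (if j' = j then δ * c i else 0) := by
        intro j'
        rw [hx'_def]
        by_cases h : j' = j
        · subst h
          simp only [if_true, hc_def]
          by_cases hi : i = i0
          · subst hi; simp only [if_true]; ring
          · simp only [if_neg hi]; ring
        · simp [h]
      rw [Finset.sum_congr rfl (fun j' _ => step j'), Finset.sum_add_distrib,
        Finset.sum_ite_eq' Finset.univ j (fun _ => δ * c i)]
      simp [hs_def]
    have hmem : primalObj b M x' ∈
        {p | ∃ x : Fin m → Fin n → ℝ, primalFeasible x ∧ p = primalObj b M x} :=
      ⟨x', ⟨hx'0, hx's⟩, rfl⟩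
    have hle : primalObj b M x' ≤ P := hP.2 hmem
    have hval : primalObj b M x' = ∑ i, M i (s i + δ * c i) := by
      rw [primalObj]
      exact Finset.sum_congr rfl fun i _ => by rw [hsum i]
    calc ∑ i, M i (s i + δ * c i) = primalObj b M x' := hval.symm
      _ ≤ P := hle
      _ = ∑ i, M i (s i + 0 * c i) := by
          rw [hPx]; simp only [zero_mul, add_zero]; rfl
  -- assemble
  have hsumy : ∑ j, y j ≤ ∑ i, g i * s i := by
    calc ∑ j, y j ≤ ∑ j, ∑ i, (b i j * g i) * x i j :=
          Finset.sum_le_sum fun j _ => key j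
      _ = ∑ i, g i * s i := by
          rw [Finset.sum_comm]
          refine Finset.sum_congr rfl fun i _ => ?_
          rw [hs_def, Finset.mul_sum]
          exact Finset.sum_congr rfl fun j _ => by ring
  have hdualP : dualObj b M s y ≤ P := by
    rw [dualObj, hPx]
    have : ∑ i, (M i (s i) - g i * s i) = ∑ i, M i (s i) - ∑ i, g i * s i :=
      Finset.sum_sub_distrib _ _
    rw [primalObj]
    have hgdef : ∀ i, deriv (M i) (s i) = g i := fun i => rfl
    simp only [hgdef]
    linarith
  have hmemD : dualObj b M s y ∈
      {d | ∃ v y, dualFeasible b M v y ∧ d = dualObj b M v y} := ⟨s, y, hfeas, rfl⟩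
  have hDP : D ≤ P := le_trans (hD.1 hmemD) hdualP
  have hPD : P ≤ D := hD.2 (fun d hd => by
    obtain ⟨v, y', hf, rfl⟩ := hd
    exact weak v y' hf)
  exact ⟨le_antisymm hPD hDP, weak⟩
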